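/- Let 𝕆 denote the octonions. For every purely imaginary octonion a of norm 1 and all octonions x, y, one has (a·x)·(a·y) = a·((x·a)·y). (This is the base case n = 1 of the key induction in the proof of Proposition 1 of the paper.) -/

import Mathlib

noncomputable section

/-- The octonions, realized as pairs of quaternions. -/
abbrev Octonion := Quaternion ℝ × Quaternion ℝ

/-- Octonion multiplication: (α₁,α₂)·(β₁,β₂) = (α₁β₁ − β̄₂α₂, β₂α₁ + α₂β̄₁). -/
def omul (a b : Octonion) : Octonion :=
  (a.1 * b.1 - star b.2 * a.2, b.2 * a.1 + a.2 * star b.1)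

/-- Octonion conjugation: (α₁,α₂)* = (ᾱ₁, −α₂). -/
def oconj (a : Octonion) : Octonion := (star a.1, -a.2)

/-- The unit octonion 1 = (1,0). -/
def oone : Octonion := ((1 : Quaternion ℝ), (0 : Quaternion ℝ))

/-- An octonion is purely imaginary if a + a* = 0. -/
def IsPurelyImaginary (a : Octonion) : Prop := a + oconj a = 0

/-- The squared Euclidean norm ‖(α₁,α₂)‖² = ‖α₁‖² + ‖α₂‖². -/
def onormSq (a : Octonion) : ℝ := ‖a.1‖ ^ 2 + ‖a.2‖ ^ 2

/-- The Euclidean norm of an octonion. -/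
def onorm (a : Octonion) : ℝ := Real.sqrt (onormSq a)

/-- An octonion is unitary if its Euclidean norm equals 1. -/
def IsUnitary (a : Octonion) : Prop := onorm a = 1
set_option maxHeartbeats 1000000 in
theorem base_case_induction (a : Octonion) (ha : IsUnitary a)
    (ha' : IsPurelyImaginary a) (x y : Octonion) :
    omul (omul a x) (omul a y) = omul a (omul (omul x a) y) := by
  have h1 : a.1.re = 0 := by
    have := congrArg (fun z : Octonion => z.1.re) ha'
    simp [oconj] at this
    change a.1.re + a.1.re = 0 at this
    linarith
  simp only [omul, Prod.ext_iff]
  constructor <;>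
  · ext <;>
    simp only [Quaternion.re_mul, Quaternion.imI_mul, Quaternion.imJ_mul, Quaternion.imK_mul,
      Quaternion.re_sub, Quaternion.imI_sub, Quaternion.imJ_sub, Quaternion.imK_sub,
      Quaternion.re_add, Quaternion.imI_add, Quaternion.imJ_add, Quaternion.imK_add,
      Quaternion.re_star, Quaternion.imI_star, Quaternion.imJ_star, Quaternion.imK_star, h1] <;>
    ring
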